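/- The sum Σ over odd squarefree d ≥ 1 of μ(d)²/(φ₂(d) · ord_d(2)) converges, where φ₂ is the multiplicative function with φ₂(p) = p − 2 on primes, extended multiplicatively to squarefree odd d. -/

import Mathlib

open Finset

/-- `φ₂` on squarefree numbers: the product of `p - 2` over the prime factors. -/
def phi2 (d : ℕ) : ℕ := ∏ p ∈ d.primeFactors, (p - 2)

lemma phi2_pos {d : ℕ} (hd : Odd d) : 1 ≤ phi2 d := by
  apply Finset.one_le_prod'
  intro p hp
  have hp' := Nat.prime_of_mem_primeFactors hp
  have hdvd := Nat.dvd_of_mem_primeFactors hp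
  have : p ≠ 2 := by
    rintro rfl
    exact (Nat.not_even_iff_odd.mpr hd) ((even_iff_two_dvd).mpr hdvd)
  have := hp'.two_le
  omega

lemma ord_pos {d : ℕ} (hd : Odd d) : 0 < orderOf (2 : ZMod d) := by
  have hd1 : d ≠ 0 := by rintro rfl; simp [Nat.odd_iff] at hd
  haveI : NeZero d := ⟨hd1⟩
  have hu : IsUnit (2 : ZMod d) := by
    have : IsUnit ((2 : ℕ) : ZMod d) := (ZMod.isUnit_iff_coprime 2 d).mpr
      (Nat.coprime_two_left.mpr hd)
    simpa using this
  obtain ⟨u, hu⟩ := hu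
  rw [← hu, orderOf_units]
  exact orderOf_pos u

lemma dvd_two_pow_sub_one {d : ℕ} (hd : Odd d) :
    d ∣ 2 ^ orderOf (2 : ZMod d) - 1 := by
  have hd1 : d ≠ 0 := by rintro rfl; simp [Nat.odd_iff] at hd
  haveI : NeZero d := ⟨hd1⟩
  have h : ((2 ^ orderOf (2 : ZMod d) - 1 : ℕ) : ZMod d) = 0 := by
    have h1 : (1 : ℕ) ≤ 2 ^ orderOf (2 : ZMod d) := Nat.one_le_two_pow
    rw [Nat.cast_sub h1]
    push_cast
    rw [pow_orderOf_eq_one (2 : ZMod d)]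
    ring
  exact (ZMod.natCast_eq_zero_iff _ _).mp h

lemma sum_inv_phi2_le (n : ℕ) (hn : n ≠ 0) (u : Finset ℕ)
    (hu : ∀ d ∈ u, Squarefree d ∧ d ∣ n) :
    ∑ d ∈ u, (1 : ℝ) / (phi2 d : ℝ) ≤
      ∏ p ∈ n.primeFactors, (1 + 1 / ((p - 2 : ℕ) : ℝ)) := by
  classical
  have hterm : ∀ d ∈ u, (1 : ℝ) / (phi2 d : ℝ)
      = ∏ p ∈ d.primeFactors, (1 / ((p - 2 : ℕ) : ℝ)) := by
    intro d _
    rw [phi2, Nat.cast_prod, one_div, ← Finset.prod_inv_distrib]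
    exact Finset.prod_congr rfl fun p _ => (one_div _).symm
  rw [Finset.sum_congr rfl hterm]
  have hinj : Set.InjOn Nat.primeFactors u := by
    intro a ha b hb hab
    rw [← Nat.prod_primeFactors_of_squarefree (hu a ha).1,
        ← Nat.prod_primeFactors_of_squarefree (hu b hb).1, hab]
  have himg : ∑ x ∈ u, ∏ p ∈ x.primeFactors, (1 / ((p - 2 : ℕ) : ℝ))
      = ∑ S ∈ u.image Nat.primeFactors, ∏ p ∈ S, (1 / ((p - 2 : ℕ) : ℝ)) :=
    (Finset.sum_image (g := Nat.primeFactors) (f := fun S => ∏ p ∈ S, (1 / ((p - 2 : ℕ) : ℝ)))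
      (fun a ha b hb h => hinj ha hb h)).symm
  rw [himg]
  have hsub : u.image Nat.primeFactors ⊆ n.primeFactors.powerset := by
    intro S hS
    obtain ⟨d, hd, rfl⟩ := Finset.mem_image.mp hS
    exact Finset.mem_powerset.mpr (Nat.primeFactors_mono (hu d hd).2 hn)
  refine le_trans (Finset.sum_le_sum_of_subset_of_nonneg hsub
    (fun S _ _ => Finset.prod_nonneg fun p _ => by positivity)) ?_
  have hc : ∀ p ∈ n.primeFactors, (1 + 1 / ((p - 2 : ℕ) : ℝ))
      = (1 / ((p - 2 : ℕ) : ℝ) + 1) := fun _ _ => add_comm _ _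
  rw [Finset.prod_congr rfl hc, Finset.prod_add]
  apply le_of_eq
  apply Finset.sum_congr rfl
  intro t ht
  rw [Finset.prod_const_one, mul_one]

lemma block_count (j : ℕ) (T : Finset ℕ)
    (hT : ∀ p ∈ T, p.Prime ∧ 2 ^ j ≤ p ∧ p < 2 ^ (j + 1)) : T.card * j ≤ 2 ^ (j + 2) := by
  have h1 : (2 ^ j) ^ T.card ≤ ∏ p ∈ T, p :=
    Finset.pow_card_le_prod T _ _ (fun p hp => (hT p hp).2.1)
  have h2 : ∏ p ∈ T, p ≤ primorial (2 ^ (j + 1)) := by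
    apply Finset.prod_le_prod_of_subset_of_one_le'
    · intro p hp
      simp only [primorial, Finset.mem_filter, Finset.mem_range]
      exact ⟨by have := (hT p hp).2.2; omega, (hT p hp).1⟩
    · intro i hi _
      simp only [primorial, Finset.mem_filter] at hi
      exact hi.2.one_lt.le
  have h3 : primorial (2 ^ (j + 1)) ≤ 4 ^ 2 ^ (j + 1) := primorial_le_4_pow _
  have h4 : (2 : ℕ) ^ (j * T.card) ≤ 2 ^ 2 ^ (j + 2) := by
    calc (2 : ℕ) ^ (j * T.card) = (2 ^ j) ^ T.card := by rw [pow_mul]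
    _ ≤ 4 ^ 2 ^ (j + 1) := le_trans h1 (le_trans h2 h3)
    _ = 2 ^ 2 ^ (j + 2) := by
        rw [show (4 : ℕ) = 2 ^ 2 from rfl, ← pow_mul, pow_succ 2 (j+1)]
        ring_nf
  have h5 := (Nat.pow_le_pow_iff_right (by norm_num : 1 < 2)).mp h4
  rw [mul_comm]; exact h5

lemma hT_helper (j : ℕ) (hj : 2 ≤ j) (p : ℕ) (hp : 2 ^ j ≤ p) :
    (2 : ℕ) ^ (j - 1) ≤ p - 2 := by
  have h1 : (2 : ℕ) ^ (j - 1) + 2 ≤ 2 ^ j := by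
    have : (2 : ℕ) ^ (j - 1) * 2 = 2 ^ j := by
      rw [← pow_succ]; congr 1; omega
    have h2 : (2 : ℕ) ^ (j - 1) ≥ 2 := by
      calc (2:ℕ) ≤ 2 ^ 1 := by norm_num
      _ ≤ 2 ^ (j-1) := Nat.pow_le_pow_right (by norm_num) (by omega)
    omega
  omega

lemma prod_bound (n s : ℕ) (hn : n ≠ 0) (hs : 2 ≤ s) (hsize : n ≤ 2 ^ 2 ^ s) :
    ∏ p ∈ n.primeFactors, (1 + 1 / ((p - 2 : ℕ) : ℝ)) ≤ Real.exp (16 + 8 * Real.log s) := by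
  classical
  set h : ℕ → ℝ := fun p => 1 / ((p - 2 : ℕ) : ℝ) with hh
  have hnonneg : ∀ p, 0 ≤ h p := fun p => by positivity
  -- step 1: product ≤ exp of sum
  have step1 : ∏ p ∈ n.primeFactors, (1 + h p) ≤ Real.exp (∑ p ∈ n.primeFactors, h p) := by
    rw [Real.exp_sum]
    apply Finset.prod_le_prod
    · intro p _; positivity
    · intro p _
      have := Real.add_one_le_exp (h p)
      linarith
  refine le_trans step1 (Real.exp_le_exp.mpr ?_)
  -- now bound the sum
  set P := n.primeFactors with hP
  have hPprime : ∀ p ∈ P, p.Prime := fun p hp => Nat.prime_of_mem_primeFactors hp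
  have hsplit := Finset.sum_filter_add_sum_filter_not P (fun p => p ≤ 2 ^ s) h
  set A := P.filter (fun p => p ≤ 2 ^ s) with hA
  set B := P.filter (fun p => ¬ p ≤ 2 ^ s) with hB
  -- Bound on B (large primes)
  have hBcard : B.card * s ≤ 2 ^ s := by
    have h1 : (2 ^ s) ^ B.card ≤ ∏ p ∈ B, p :=
      Finset.pow_card_le_prod B _ _ (fun p hp => by
        have := (Finset.mem_filter.mp hp).2; omega)
    have h2 : ∏ p ∈ B, p ∣ n :=
      dvd_trans (Finset.prod_dvd_prod_of_subset B P _ (Finset.filter_subset _ _))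
        (Nat.prod_primeFactors_dvd n)
    have h3 : (2 : ℕ) ^ (s * B.card) ≤ 2 ^ 2 ^ s := by
      rw [pow_mul]
      exact le_trans h1 (le_trans (Nat.le_of_dvd (Nat.pos_of_ne_zero hn) h2) hsize)
    have h4 := (Nat.pow_le_pow_iff_right (by norm_num : 1 < 2)).mp h3
    rw [mul_comm]; exact h4
  have hBsum : ∑ p ∈ B, h p ≤ 1 := by
    have hterm : ∀ p ∈ B, h p ≤ (((2:ℕ) ^ (s - 1) : ℕ) : ℝ)⁻¹ := by
      intro p hp
      have hps : 2 ^ s ≤ p := by have := (Finset.mem_filter.mp hp).2; omega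
      have := hT_helper s hs p hps
      rw [hh]
      simp only [one_div]
      apply inv_anti₀
      · positivity
      · exact_mod_cast this
    calc ∑ p ∈ B, h p ≤ ∑ p ∈ B, (((2:ℕ) ^ (s - 1) : ℕ) : ℝ)⁻¹ := Finset.sum_le_sum hterm
    _ = B.card * (((2:ℕ) ^ (s - 1) : ℕ) : ℝ)⁻¹ := by rw [Finset.sum_const, nsmul_eq_mul]
    _ ≤ 1 := by
        have hcard : (B.card : ℝ) * s ≤ 2 ^ s := by exact_mod_cast hBcard
        have hs0 : (0:ℝ) < s := by positivity
        have hp1 : (0:ℝ) < 2 ^ (s-1) := by positivity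
        have h2s : (2:ℝ)^(s-1) * 2 = 2^s := by rw [← pow_succ]; congr 1; omega
        push_cast
        rw [mul_inv_le_iff₀ hp1, one_mul]
        have hs2 : (2:ℝ) ≤ (s:ℝ) := by exact_mod_cast hs
        nlinarith [(show (0:ℝ) ≤ (B.card:ℝ) from Nat.cast_nonneg _)]
  -- Bound on A (small primes)
  set A1 := A.filter (fun p => p ≤ 3) with hA1
  set A2 := A.filter (fun p => ¬ p ≤ 3) with hA2
  have hsplitA := Finset.sum_filter_add_sum_filter_not A (fun p => p ≤ 3) h
  have hA1sum : ∑ p ∈ A1, h p ≤ 2 := by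
    have hsub : A1 ⊆ ({2, 3} : Finset ℕ) := by
      intro p hp
      have h1 := (Finset.mem_filter.mp hp).2
      have h2 := (hPprime p (Finset.mem_filter.mp (Finset.mem_filter.mp hp).1).1).two_le
      simp only [Finset.mem_insert, Finset.mem_singleton]
      omega
    have hbound : ∀ p ∈ A1, h p ≤ 1 := by
      intro p hp
      rcases Finset.mem_insert.mp (hsub hp) with rfl | hp3
      · simp [hh]
      · rw [Finset.mem_singleton] at hp3
        subst hp3
        simp [hh]
    calc ∑ p ∈ A1, h p ≤ ∑ p ∈ A1, (1:ℝ) := Finset.sum_le_sum hbound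
    _ = A1.card := by rw [Finset.sum_const, nsmul_eq_mul, mul_one]
    _ ≤ 2 := by
        have := Finset.card_le_card hsub
        have h22 : ({2, 3} : Finset ℕ).card = 2 := rfl
        exact_mod_cast le_trans this (le_of_eq h22)
  have hA2sum : ∑ p ∈ A2, h p ≤ 8 * (1 + Real.log s) := by
    have hmaps : ∀ p ∈ A2, Nat.log 2 p ∈ Finset.Icc 2 s := by
      intro p hp
      have h1 : ¬ p ≤ 3 := (Finset.mem_filter.mp hp).2
      have h2 : p ≤ 2 ^ s := (Finset.mem_filter.mp (Finset.mem_filter.mp hp).1).2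
      have hp0 : p ≠ 0 := by omega
      rw [Finset.mem_Icc]
      constructor
      · exact (Nat.le_log_iff_pow_le (by norm_num) hp0).mpr (by omega : 2 ^ 2 ≤ p)
      · calc Nat.log 2 p ≤ Nat.log 2 (2 ^ s) := Nat.log_mono_right h2
        _ = s := Nat.log_pow (by norm_num) s
    rw [← Finset.sum_fiberwise_of_maps_to hmaps h]
    have hfiber : ∀ j ∈ Finset.Icc 2 s,
        ∑ p ∈ A2.filter (fun p => Nat.log 2 p = j), h p ≤ 8 / (j : ℝ) := by
      intro j hj
      have hj2 : 2 ≤ j := (Finset.mem_Icc.mp hj).1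
      set T := A2.filter (fun p => Nat.log 2 p = j) with hT
      have hTprops : ∀ p ∈ T, p.Prime ∧ 2 ^ j ≤ p ∧ p < 2 ^ (j + 1) := by
        intro p hp
        obtain ⟨hpA2, hlog⟩ := Finset.mem_filter.mp hp
        have hprime := hPprime p (Finset.mem_filter.mp (Finset.mem_filter.mp hpA2).1).1
        have hp0 : p ≠ 0 := hprime.pos.ne'
        refine ⟨hprime, ?_, ?_⟩
        · rw [← hlog]; exact Nat.pow_log_le_self 2 hp0
        · rw [← hlog]; exact Nat.lt_pow_succ_log_self (by norm_num) p
      have hcard := block_count j T hTprops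
      have hterm : ∀ p ∈ T, h p ≤ (((2:ℕ) ^ (j - 1) : ℕ) : ℝ)⁻¹ := by
        intro p hp
        have := hT_helper j hj2 p (hTprops p hp).2.1
        rw [hh]
        simp only [one_div]
        apply inv_anti₀
        · positivity
        · exact_mod_cast this
      calc ∑ p ∈ T, h p ≤ ∑ p ∈ T, (((2:ℕ) ^ (j - 1) : ℕ) : ℝ)⁻¹ := Finset.sum_le_sum hterm
      _ = T.card * (((2:ℕ) ^ (j - 1) : ℕ) : ℝ)⁻¹ := by rw [Finset.sum_const, nsmul_eq_mul]
      _ ≤ 8 / (j : ℝ) := by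
          push_cast
          have hp1 : (0:ℝ) < 2 ^ (j-1) := by positivity
          have hj0 : (0:ℝ) < (j:ℝ) := by positivity
          rw [mul_inv_le_iff₀ hp1, div_mul_eq_mul_div, le_div_iff₀ hj0]
          have hcastcard : (T.card : ℝ) * j ≤ 2 ^ (j+2) := by exact_mod_cast hcard
          have hpow : (2:ℝ) ^ (j+2) = 8 * 2 ^ (j-1) := by
            rw [show j + 2 = (j-1) + 3 by omega, pow_add]
            ring
          linarith
    have hsum8 : ∑ j ∈ Finset.Icc 2 s, (8:ℝ) / (j:ℝ) ≤ 8 * (1 + Real.log s) := by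
      have h1 : ∑ j ∈ Finset.Icc 2 s, (8:ℝ) / (j:ℝ) = 8 * ∑ j ∈ Finset.Icc 2 s, ((j:ℝ))⁻¹ := by
        rw [Finset.mul_sum]
        exact Finset.sum_congr rfl fun j _ => by rw [div_eq_mul_inv]
      rw [h1]
      have h2 : ∑ j ∈ Finset.Icc 2 s, ((j:ℝ))⁻¹ ≤ ∑ j ∈ Finset.Icc 1 s, ((j:ℝ))⁻¹ :=
        Finset.sum_le_sum_of_subset_of_nonneg
          (Finset.Icc_subset_Icc_left (by norm_num)) (fun i _ _ => by positivity)
      have h3 : ∑ j ∈ Finset.Icc 1 s, ((j:ℝ))⁻¹ = ((harmonic s : ℚ) : ℝ) := by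
        rw [harmonic_eq_sum_Icc]
        push_cast
        rfl
      have h4 := harmonic_le_one_add_log s
      have hlog0 : (0:ℝ) ≤ Real.log s := Real.log_natCast_nonneg s
      nlinarith [h2, h3 ▸ h2]
    exact le_trans (Finset.sum_le_sum hfiber) hsum8
  have hlog0 : (0:ℝ) ≤ Real.log s := Real.log_natCast_nonneg s
  linarith [hsplit, hsplitA, hA1sum, hA2sum, hBsum]

def Nbig (x : ℕ) : ℕ := ∏ i ∈ Finset.Icc 1 x, (2 ^ i - 1)

lemma Nbig_pos (x : ℕ) : 0 < Nbig x :=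
  Finset.prod_pos fun i hi => by
    have : 1 ≤ i := (Finset.mem_Icc.mp hi).1
    have : 2 ≤ 2 ^ i := by calc (2:ℕ) = 2^1 := rfl
                                _ ≤ 2^i := Nat.pow_le_pow_right (by norm_num) this
    omega

lemma Nbig_le (x : ℕ) : Nbig x ≤ 2 ^ (x * x) := by
  calc Nbig x ≤ ∏ i ∈ Finset.Icc 1 x, 2 ^ i :=
        Finset.prod_le_prod' fun i _ => Nat.sub_le _ _
  _ = 2 ^ (∑ i ∈ Finset.Icc 1 x, i) := by rw [← Finset.prod_pow_eq_pow_sum]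
  _ ≤ 2 ^ (x * x) := by
      apply Nat.pow_le_pow_right (by norm_num)
      calc ∑ i ∈ Finset.Icc 1 x, i ≤ ∑ i ∈ Finset.Icc 1 x, x :=
            Finset.sum_le_sum fun i hi => (Finset.mem_Icc.mp hi).2
      _ = (Finset.Icc 1 x).card * x := by rw [Finset.sum_const, smul_eq_mul]
      _ ≤ x * x := by rw [Nat.card_Icc]; simp

noncomputable def Gmaj (k : ℕ) : ℝ :=
  (1 / 2 : ℝ) ^ k * Real.exp (16 + 8 * Real.log ((2 * k + 4 : ℕ) : ℝ))

lemma Gmaj_nonneg (k : ℕ) : 0 ≤ Gmaj k := by unfold Gmaj; positivity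

lemma summable_Gmaj : Summable Gmaj := by
  have base : Summable (fun n : ℕ => ((n : ℝ)) ^ 8 * (1 / 2 : ℝ) ^ n) :=
    summable_pow_mul_geometric_of_norm_lt_one 8
      (by rw [Real.norm_eq_abs, abs_of_pos] <;> norm_num)
  have shift : Summable (fun k : ℕ => (((k : ℝ)) + 1) ^ 8 * (1 / 2 : ℝ) ^ k) := by
    have h1 := (base.comp_injective Nat.succ_injective).mul_left 2
    apply h1.congr
    intro k
    simp only [Function.comp]
    rw [Nat.succ_eq_add_one, pow_succ]
    push_cast
    ring
  apply ((shift.mul_left ((6:ℝ) ^ 8 * Real.exp 16)).of_nonneg_of_le Gmaj_nonneg)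
  intro k
  have hfact : Real.exp (16 + 8 * Real.log ((2 * k + 4 : ℕ) : ℝ))
      = Real.exp 16 * ((2 * (k:ℝ) + 4)) ^ 8 := by
    rw [Real.exp_add]
    congr 1
    rw [show (8 : ℝ) * Real.log ((2 * k + 4 : ℕ) : ℝ)
        = Real.log (((2 * k + 4 : ℕ) : ℝ) ^ (8:ℕ)) by rw [Real.log_pow]; push_cast; ring]
    rw [Real.exp_log (by positivity)]
    push_cast; ring
  unfold Gmaj
  rw [hfact]
  have hb : (2 * (k:ℝ) + 4) ^ 8 ≤ (6:ℝ) ^ 8 * ((k:ℝ) + 1) ^ 8 := by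
    rw [← mul_pow]
    apply pow_le_pow_left₀ (by positivity)
    linarith
  have hp : (0:ℝ) ≤ (1/2:ℝ)^k := by positivity
  calc (1 / 2 : ℝ) ^ k * (Real.exp 16 * (2 * (k:ℝ) + 4) ^ 8)
      ≤ (1 / 2 : ℝ) ^ k * (Real.exp 16 * ((6:ℝ) ^ 8 * ((k:ℝ) + 1) ^ 8)) := by
        apply mul_le_mul_of_nonneg_left _ hp
        apply mul_le_mul_of_nonneg_left hb (Real.exp_pos 16).le
  _ = (6:ℝ) ^ 8 * Real.exp 16 * (((k : ℝ) + 1) ^ 8 * (1 / 2 : ℝ) ^ k) := by ring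

theorem stmt_18 :
    Summable (fun d : ℕ =>
      if Odd d ∧ Squarefree d then
        1 / ((phi2 d : ℝ) * (orderOf (2 : ZMod d) : ℝ))
      else 0) := by
  classical
  set f : ℕ → ℝ := fun d =>
      if Odd d ∧ Squarefree d then
        1 / ((phi2 d : ℝ) * (orderOf (2 : ZMod d) : ℝ))
      else 0 with hf
  have hnonneg : 0 ≤ f := by
    intro d
    rw [hf]
    dsimp only
    split
    · positivity
    · exact le_refl 0
  apply summable_of_sum_le hnonneg
  intro u
  have hfilter : ∑ d ∈ u, f d
      = ∑ d ∈ u.filter (fun d => Odd d ∧ Squarefree d),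
          1 / ((phi2 d : ℝ) * (orderOf (2 : ZMod d) : ℝ)) := by
    rw [Finset.sum_filter]
  rw [hfilter]
  set u' := u.filter (fun d => Odd d ∧ Squarefree d) with hu'
  have hu'mem : ∀ d ∈ u', Odd d ∧ Squarefree d := by
    intro d hd
    exact (Finset.mem_filter.mp hd).2
  set kf : ℕ → ℕ := fun d => Nat.log 2 (orderOf (2 : ZMod d)) with hkf
  set K := u'.sup kf with hK
  have hmaps : ∀ d ∈ u', kf d ∈ Finset.range (K + 1) := by
    intro d hd
    rw [Finset.mem_range, Nat.lt_succ_iff]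
    exact Finset.le_sup hd
  rw [← Finset.sum_fiberwise_of_maps_to hmaps
    (fun d => 1 / ((phi2 d : ℝ) * (orderOf (2 : ZMod d) : ℝ)))]
  have hfiber : ∀ k ∈ Finset.range (K + 1),
      ∑ d ∈ u'.filter (fun d => kf d = k),
        1 / ((phi2 d : ℝ) * (orderOf (2 : ZMod d) : ℝ)) ≤ Gmaj k := by
    intro k _
    set T := u'.filter (fun d => kf d = k) with hT
    set n := Nbig (2 ^ (k + 1)) with hn
    -- every d in T divides n, is odd and squarefree, and has order ≥ 2^k
    have hdT : ∀ d ∈ T, Odd d ∧ Squarefree d ∧ d ∣ n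
        ∧ 2 ^ k ≤ orderOf (2 : ZMod d) := by
      intro d hd
      obtain ⟨hdu', hlog⟩ := Finset.mem_filter.mp hd
      obtain ⟨hodd, hsf⟩ := hu'mem d hdu'
      have hop : 0 < orderOf (2 : ZMod d) := ord_pos hodd
      have h2k : 2 ^ k ≤ orderOf (2 : ZMod d) := by
        rw [← hlog]
        exact Nat.pow_log_le_self 2 hop.ne'
      have hlt : orderOf (2 : ZMod d) < 2 ^ (k + 1) := by
        rw [← hlog]
        exact Nat.lt_pow_succ_log_self (by norm_num) _
      have hmem : orderOf (2 : ZMod d) ∈ Finset.Icc 1 (2 ^ (k + 1)) :=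
        Finset.mem_Icc.mpr ⟨hop, hlt.le⟩
      exact ⟨hodd, hsf, dvd_trans (dvd_two_pow_sub_one hodd)
        (Finset.dvd_prod_of_mem _ hmem), h2k⟩
    have hstep : ∀ d ∈ T, 1 / ((phi2 d : ℝ) * (orderOf (2 : ZMod d) : ℝ))
        ≤ (1 / 2 ^ k) * (1 / (phi2 d : ℝ)) := by
      intro d hd
      obtain ⟨hodd, _, _, h2k⟩ := hdT d hd
      have hphi : (1:ℝ) ≤ (phi2 d : ℝ) := by exact_mod_cast phi2_pos hodd
      have hordR : (2:ℝ) ^ k ≤ (orderOf (2 : ZMod d) : ℝ) := by exact_mod_cast h2k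
      have hpk : (0:ℝ) < 2 ^ k := by positivity
      rw [one_div, mul_inv, one_div, one_div, mul_comm ((2:ℝ)^k)⁻¹ _]
      apply mul_le_mul_of_nonneg_left _ (by positivity)
      exact inv_anti₀ hpk hordR
    have hsum1 : ∑ d ∈ T, 1 / ((phi2 d : ℝ) * (orderOf (2 : ZMod d) : ℝ))
        ≤ (1 / 2 ^ k) * ∑ d ∈ T, 1 / (phi2 d : ℝ) := by
      rw [Finset.mul_sum]
      exact Finset.sum_le_sum hstep
    have hsum2 : ∑ d ∈ T, 1 / (phi2 d : ℝ)
        ≤ ∏ p ∈ n.primeFactors, (1 + 1 / ((p - 2 : ℕ) : ℝ)) :=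
      sum_inv_phi2_le n (Nbig_pos _).ne' T
        (fun d hd => ⟨(hdT d hd).2.1, (hdT d hd).2.2.1⟩)
    have hsum3 : ∏ p ∈ n.primeFactors, (1 + 1 / ((p - 2 : ℕ) : ℝ))
        ≤ Real.exp (16 + 8 * Real.log ((2 * k + 4 : ℕ) : ℝ)) := by
      apply prod_bound n (2 * k + 4) (Nbig_pos _).ne' (by omega)
      calc n ≤ 2 ^ (2 ^ (k+1) * 2 ^ (k+1)) := Nbig_le _
      _ ≤ 2 ^ 2 ^ (2 * k + 4) := by
          apply Nat.pow_le_pow_right (by norm_num)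
          rw [← pow_add]
          exact Nat.pow_le_pow_right (by norm_num) (by omega)
    calc ∑ d ∈ T, 1 / ((phi2 d : ℝ) * (orderOf (2 : ZMod d) : ℝ))
        ≤ (1 / 2 ^ k) * ∑ d ∈ T, 1 / (phi2 d : ℝ) := hsum1
    _ ≤ (1 / 2 ^ k) * Real.exp (16 + 8 * Real.log ((2 * k + 4 : ℕ) : ℝ)) := by
        apply mul_le_mul_of_nonneg_left (le_trans hsum2 hsum3) (by positivity)
    _ = Gmaj k := by rw [Gmaj, div_pow, one_pow]
  calc ∑ k ∈ Finset.range (K + 1), ∑ d ∈ u'.filter (fun d => kf d = k),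
        1 / ((phi2 d : ℝ) * (orderOf (2 : ZMod d) : ℝ))
      ≤ ∑ k ∈ Finset.range (K + 1), Gmaj k := Finset.sum_le_sum hfiber
  _ ≤ ∑' k, Gmaj k := Summable.sum_le_tsum _ (fun k _ => Gmaj_nonneg k) summable_Gmaj
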